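/- Let k be a positive definite function on S, let S = S_1 ∪ ... ∪ S_t be a partition of S into disjoint subdomains, and let X̲ be a set of r distinct points in S such that the matrix k(X̲,X̲) is invertible. Define k_h(x,x') = k(x,x') if x and x' lie in the same subdomain S_j, and k_h(x,x') = k(x,X̲) k(X̲,X̲)^{-1} k(X̲,x') otherwise. Then k_h is a positive definite function on S. -/

import Mathlib

/-- The Gram matrix `k(X̲,X̲)` of a kernel `k` at the landmark points `u 0, …, u (r-1)`. -/
noncomputable def gramMatrix {S : Type*} (k : S → S → ℝ) {r : ℕ} (u : Fin r → S) :
    Matrix (Fin r) (Fin r) ℝ :=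
  Matrix.of fun a b => k (u a) (u b)

/-- The Nyström approximation `k(x,X̲) k(X̲,X̲)⁻¹ k(X̲,x')`. -/
noncomputable def nystrom {S : Type*} (k : S → S → ℝ) {r : ℕ} (u : Fin r → S)
    (x x' : S) : ℝ :=
  ∑ a, ∑ b, k x (u a) * (gramMatrix k u)⁻¹ a b * k (u b) x'

/-- A symmetric function `k : S × S → ℝ` is positive definite if every quadratic form
`∑ᵢⱼ αᵢ αⱼ k(xᵢ,xⱼ)` is nonnegative. -/
def IsPosDefKernel {S : Type*} (k : S → S → ℝ) : Prop :=
  (∀ x x', k x x' = k x' x) ∧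
  ∀ (n : ℕ) (x : Fin n → S) (α : Fin n → ℝ),
    0 ≤ ∑ i, ∑ j, α i * α j * k (x i) (x j)

section Aux
variable {S : Type*} (k : S → S → ℝ) {r : ℕ} (u : Fin r → S)

lemma gramInv_symm (hk : IsPosDefKernel k) (a b : Fin r) :
    (gramMatrix k u)⁻¹ a b = (gramMatrix k u)⁻¹ b a := by
  have hT : (gramMatrix k u).transpose = gramMatrix k u := by
    ext a b; simp [gramMatrix, Matrix.transpose_apply, hk.1]
  have h2 : ((gramMatrix k u)⁻¹).transpose = ((gramMatrix k u).transpose)⁻¹ :=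
    Matrix.transpose_nonsing_inv _
  rw [hT] at h2
  have h3 : ((gramMatrix k u)⁻¹).transpose a b = (gramMatrix k u)⁻¹ a b := by rw [h2]
  rw [← h3]; rfl

lemma nystrom_symm (hk : IsPosDefKernel k) (x x' : S) :
    nystrom k u x x' = nystrom k u x' x := by
  unfold nystrom
  rw [Finset.sum_comm]
  refine Finset.sum_congr rfl fun b _ => Finset.sum_congr rfl fun a _ => ?_
  rw [gramInv_symm k u hk a b, hk.1 x (u a), hk.1 (u b) x']
  ring

noncomputable def nvec {n : ℕ} (x : Fin n → S) (α : Fin n → ℝ) : Fin r → ℝ :=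
  fun a => ∑ i, α i * k (x i) (u a)

noncomputable def nwvec {n : ℕ} (x : Fin n → S) (α : Fin n → ℝ) : Fin r → ℝ :=
  (gramMatrix k u)⁻¹.mulVec (nvec k u x α)

lemma Kw_eq_v' (hK : IsUnit (gramMatrix k u).det) {n : ℕ} (x : Fin n → S) (α : Fin n → ℝ)
    (a : Fin r) :
    ∑ b, k (u a) (u b) * nwvec k u x α b = nvec k u x α a := by
  have h : (gramMatrix k u).mulVec (nwvec k u x α) = nvec k u x α := by
    unfold nwvec
    rw [Matrix.mulVec_mulVec, Matrix.mul_nonsing_inv _ hK, Matrix.one_mulVec]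
  have := congrFun h a
  simpa [Matrix.mulVec, dotProduct, gramMatrix] using this

lemma nyQ_eq (hk : IsPosDefKernel k) {n : ℕ} (x : Fin n → S) (α : Fin n → ℝ) :
    ∑ i, ∑ j, α i * α j * nystrom k u (x i) (x j)
      = ∑ a, nvec k u x α a * nwvec k u x α a := by
  have step1 : ∀ i j : Fin n, α i * α j * nystrom k u (x i) (x j)
      = ∑ a, ∑ b, (α i * k (x i) (u a)) * (gramMatrix k u)⁻¹ a b * (α j * k (x j) (u b)) := by
    intro i j
    unfold nystrom
    rw [Finset.mul_sum]
    refine Finset.sum_congr rfl fun a _ => ?_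
    rw [Finset.mul_sum]
    refine Finset.sum_congr rfl fun b _ => ?_
    rw [hk.1 (u b) (x j)]
    ring
  calc ∑ i, ∑ j, α i * α j * nystrom k u (x i) (x j)
      = ∑ i, ∑ j, ∑ a, ∑ b, (α i * k (x i) (u a)) * (gramMatrix k u)⁻¹ a b * (α j * k (x j) (u b)) :=
        Finset.sum_congr rfl fun i _ => Finset.sum_congr rfl fun j _ => step1 i j
    _ = ∑ i, ∑ a, ∑ j, ∑ b, (α i * k (x i) (u a)) * (gramMatrix k u)⁻¹ a b * (α j * k (x j) (u b)) :=
        Finset.sum_congr rfl fun i _ => Finset.sum_comm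
    _ = ∑ a, ∑ i, ∑ j, ∑ b, (α i * k (x i) (u a)) * (gramMatrix k u)⁻¹ a b * (α j * k (x j) (u b)) :=
        Finset.sum_comm
    _ = ∑ a, ∑ i, ∑ b, ∑ j, (α i * k (x i) (u a)) * (gramMatrix k u)⁻¹ a b * (α j * k (x j) (u b)) :=
        Finset.sum_congr rfl fun a _ => Finset.sum_congr rfl fun i _ => Finset.sum_comm
    _ = ∑ a, ∑ b, ∑ i, ∑ j, (α i * k (x i) (u a)) * (gramMatrix k u)⁻¹ a b * (α j * k (x j) (u b)) :=
        Finset.sum_congr rfl fun a _ => Finset.sum_comm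
    _ = ∑ a, ∑ b, (nvec k u x α a) * (gramMatrix k u)⁻¹ a b * (nvec k u x α b) := by
        refine Finset.sum_congr rfl fun a _ => Finset.sum_congr rfl fun b _ => ?_
        unfold nvec
        rw [Finset.sum_mul, Finset.sum_mul]
        refine Finset.sum_congr rfl fun i _ => ?_
        rw [Finset.mul_sum]
    _ = ∑ a, nvec k u x α a * nwvec k u x α a := by
        refine Finset.sum_congr rfl fun a _ => ?_
        unfold nwvec
        simp only [Matrix.mulVec, dotProduct, Finset.mul_sum]
        refine Finset.sum_congr rfl fun b _ => ?_
        ring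

lemma vw_nonneg (hk : IsPosDefKernel k) (hK : IsUnit (gramMatrix k u).det)
    {n : ℕ} (x : Fin n → S) (α : Fin n → ℝ) :
    0 ≤ ∑ a, nvec k u x α a * nwvec k u x α a := by
  have h := hk.2 r u (nwvec k u x α)
  calc (0:ℝ) ≤ ∑ a, ∑ b, nwvec k u x α a * nwvec k u x α b * k (u a) (u b) := h
    _ = ∑ a, nvec k u x α a * nwvec k u x α a := by
        refine Finset.sum_congr rfl fun a _ => ?_
        rw [← Kw_eq_v' k u hK x α a, Finset.sum_mul]
        exact Finset.sum_congr rfl fun b _ => by ring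

lemma nyQ_nonneg (hk : IsPosDefKernel k) (hK : IsUnit (gramMatrix k u).det)
    {n : ℕ} (x : Fin n → S) (α : Fin n → ℝ) :
    0 ≤ ∑ i, ∑ j, α i * α j * nystrom k u (x i) (x j) := by
  rw [nyQ_eq k u hk x α]; exact vw_nonneg k u hk hK x α

lemma residual_nonneg (hk : IsPosDefKernel k) (hK : IsUnit (gramMatrix k u).det)
    {n : ℕ} (x : Fin n → S) (α : Fin n → ℝ) :
    0 ≤ ∑ i, ∑ j, α i * α j * (k (x i) (x j) - nystrom k u (x i) (x j)) := by
  have big := hk.2 (n + r) (Fin.append x u) (Fin.append α (fun a => -(nwvec k u x α a)))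
  set y : Fin (n + r) → S := Fin.append x u with hy
  set β : Fin (n + r) → ℝ := Fin.append α (fun a => -(nwvec k u x α a)) with hβ
  have expand : ∑ p, ∑ q, β p * β q * k (y p) (y q)
      = (∑ i, ∑ j, α i * α j * k (x i) (x j))
        - (∑ a, nvec k u x α a * nwvec k u x α a)
        - (∑ a, nvec k u x α a * nwvec k u x α a)
        + (∑ a, ∑ b, nwvec k u x α a * nwvec k u x α b * k (u a) (u b)) := by
    rw [Fin.sum_univ_add]
    have e1 : ∀ p : Fin (n + r), ∑ q, β p * β q * k (y p) (y q)
        = (∑ j, β p * β (Fin.castAdd r j) * k (y p) (y (Fin.castAdd r j)))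
          + ∑ b, β p * β (Fin.natAdd n b) * k (y p) (y (Fin.natAdd n b)) :=
      fun p => Fin.sum_univ_add _
    simp only [e1]
    rw [Finset.sum_add_distrib, Finset.sum_add_distrib]
    simp only [hy, hβ, Fin.append_left, Fin.append_right]
    have c1 : ∑ i, ∑ b, α i * -(nwvec k u x α b) * k (x i) (u b)
        = -(∑ a, nvec k u x α a * nwvec k u x α a) := by
      calc ∑ i, ∑ b, α i * -(nwvec k u x α b) * k (x i) (u b)
          = ∑ b, ∑ i, α i * -(nwvec k u x α b) * k (x i) (u b) := Finset.sum_comm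
        _ = ∑ b, -(nvec k u x α b * nwvec k u x α b) := by
            refine Finset.sum_congr rfl fun b _ => ?_
            unfold nvec
            rw [Finset.sum_mul, ← Finset.sum_neg_distrib]
            exact Finset.sum_congr rfl fun i _ => by ring
        _ = -(∑ a, nvec k u x α a * nwvec k u x α a) := Finset.sum_neg_distrib _
    have c2 : ∑ a, ∑ j, -(nwvec k u x α a) * α j * k (u a) (x j)
        = -(∑ a, nvec k u x α a * nwvec k u x α a) := by
      calc ∑ a, ∑ j, -(nwvec k u x α a) * α j * k (u a) (x j)
          = ∑ a, -(nvec k u x α a * nwvec k u x α a) := by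
            refine Finset.sum_congr rfl fun a _ => ?_
            unfold nvec
            rw [Finset.sum_mul, ← Finset.sum_neg_distrib]
            refine Finset.sum_congr rfl fun j _ => ?_
            rw [hk.1 (u a) (x j)]; ring
        _ = -(∑ a, nvec k u x α a * nwvec k u x α a) := Finset.sum_neg_distrib _
    have c3 : ∑ a, ∑ b, -(nwvec k u x α a) * -(nwvec k u x α b) * k (u a) (u b)
        = ∑ a, ∑ b, nwvec k u x α a * nwvec k u x α b * k (u a) (u b) :=
      Finset.sum_congr rfl fun a _ => Finset.sum_congr rfl fun b _ => by ring
    rw [c1, c2, c3]; ring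
  have c4 : ∑ a, ∑ b, nwvec k u x α a * nwvec k u x α b * k (u a) (u b)
      = ∑ a, nvec k u x α a * nwvec k u x α a := by
    refine Finset.sum_congr rfl fun a _ => ?_
    rw [← Kw_eq_v' k u hK x α a, Finset.sum_mul]
    exact Finset.sum_congr rfl fun b _ => by ring
  rw [expand, c4] at big
  have final : ∑ i, ∑ j, α i * α j * (k (x i) (x j) - nystrom k u (x i) (x j))
      = (∑ i, ∑ j, α i * α j * k (x i) (x j)) - ∑ a, nvec k u x α a * nwvec k u x α a := by
    have h5 : ∑ i, ∑ j, α i * α j * (k (x i) (x j) - nystrom k u (x i) (x j))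
        = (∑ i, ∑ j, α i * α j * k (x i) (x j))
          - ∑ i, ∑ j, α i * α j * nystrom k u (x i) (x j) := by
      rw [← Finset.sum_sub_distrib]
      refine Finset.sum_congr rfl fun i _ => ?_
      rw [← Finset.sum_sub_distrib]
      exact Finset.sum_congr rfl fun j _ => by ring
    rw [h5, nyQ_eq k u hk x α]
  rw [final]
  linarith

end Aux

/-- if `k` is positive definite, `S = S_1 ∪ ⋯ ∪ S_t` is a partition into
disjoint subdomains, `X̲` is a set of `r` distinct points with `k(X̲,X̲)` invertible, and
`k_h(x,x') = k(x,x')` when `x, x'` lie in a common subdomain while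
`k_h(x,x') = k(x,X̲) k(X̲,X̲)⁻¹ k(X̲,x')` otherwise, then `k_h` is positive definite. -/
theorem oneLevel_posDef {S : Type*} {t : ℕ} (k : S → S → ℝ)
    (hk : IsPosDefKernel k)
    (P : Fin t → Set S)
    (hcover : ∀ x : S, ∃ j, x ∈ P j)
    (hdisj : ∀ j j' : Fin t, j ≠ j' → Disjoint (P j) (P j'))
    {r : ℕ} (u : Fin r → S) (hu : Function.Injective u)
    (hK : IsUnit (gramMatrix k u).det)
    (kh : S → S → ℝ)
    (hkh_same : ∀ x x', (∃ j, x ∈ P j ∧ x' ∈ P j) → kh x x' = k x x')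
    (hkh_diff : ∀ x x', (¬ ∃ j, x ∈ P j ∧ x' ∈ P j) → kh x x' = nystrom k u x x') :
    IsPosDefKernel kh := by
  classical
  set c : S → Fin t := fun x => (hcover x).choose with hcdef
  have hmem : ∀ x, x ∈ P (c x) := fun x => (hcover x).choose_spec
  have hiff : ∀ x x' : S, (∃ j, x ∈ P j ∧ x' ∈ P j) ↔ c x = c x' := by
    intro x x'
    constructor
    · rintro ⟨j, hx, hx'⟩
      have e1 : c x = j := by
        by_contra hne
        exact (hdisj _ _ hne).le_bot ⟨hmem x, hx⟩
      have e2 : c x' = j := by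
        by_contra hne
        exact (hdisj _ _ hne).le_bot ⟨hmem x', hx'⟩
      rw [e1, e2]
    · intro h
      exact ⟨c x, hmem x, h ▸ hmem x'⟩
  constructor
  · intro x x'
    by_cases h : ∃ j, x ∈ P j ∧ x' ∈ P j
    · have h' : ∃ j, x' ∈ P j ∧ x ∈ P j := by obtain ⟨j, a, b⟩ := h; exact ⟨j, b, a⟩
      rw [hkh_same x x' h, hkh_same x' x h', hk.1]
    · have h' : ¬ ∃ j, x' ∈ P j ∧ x ∈ P j := by
        rintro ⟨j, a, b⟩; exact h ⟨j, b, a⟩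
      rw [hkh_diff x x' h, hkh_diff x' x h', nystrom_symm k u hk]
  · intro n x α
    set αl : Fin t → Fin n → ℝ := fun l i => if c (x i) = l then α i else 0 with hαl
    have key : ∀ i j : Fin n, α i * α j * kh (x i) (x j)
        = α i * α j * nystrom k u (x i) (x j)
          + ∑ l, αl l i * αl l j * (k (x i) (x j) - nystrom k u (x i) (x j)) := by
      intro i j
      by_cases h : c (x i) = c (x j)
      · have hsum : ∑ l, αl l i * αl l j * (k (x i) (x j) - nystrom k u (x i) (x j))
            = α i * α j * (k (x i) (x j) - nystrom k u (x i) (x j)) := by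
          rw [Finset.sum_eq_single (c (x i))]
          · simp [hαl, h.symm]
          · intro l _ hl
            simp [hαl, Ne.symm hl]
          · intro habs; exact absurd (Finset.mem_univ _) habs
        rw [hsum, hkh_same _ _ ((hiff _ _).mpr h)]
        ring
      · have hsum : ∑ l, αl l i * αl l j * (k (x i) (x j) - nystrom k u (x i) (x j)) = 0 := by
          apply Finset.sum_eq_zero
          intro l _
          by_cases hl : c (x i) = l
          · have : c (x j) ≠ l := fun e => h (hl.trans e.symm)
            simp [hαl, this]
          · simp [hαl, hl]
        rw [hsum, hkh_diff _ _ (fun e => h ((hiff _ _).mp e))]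
        ring
    have split : ∑ i, ∑ j, α i * α j * kh (x i) (x j)
        = (∑ i, ∑ j, α i * α j * nystrom k u (x i) (x j))
          + ∑ l, ∑ i, ∑ j, αl l i * αl l j * (k (x i) (x j) - nystrom k u (x i) (x j)) := by
      calc ∑ i, ∑ j, α i * α j * kh (x i) (x j)
          = ∑ i, ∑ j, (α i * α j * nystrom k u (x i) (x j)
            + ∑ l, αl l i * αl l j * (k (x i) (x j) - nystrom k u (x i) (x j))) :=
            Finset.sum_congr rfl fun i _ => Finset.sum_congr rfl fun j _ => key i j
        _ = (∑ i, ∑ j, α i * α j * nystrom k u (x i) (x j))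
            + ∑ i, ∑ j, ∑ l, αl l i * αl l j * (k (x i) (x j) - nystrom k u (x i) (x j)) := by
            rw [← Finset.sum_add_distrib]
            refine Finset.sum_congr rfl fun i _ => ?_
            rw [← Finset.sum_add_distrib]
        _ = (∑ i, ∑ j, α i * α j * nystrom k u (x i) (x j))
            + ∑ l, ∑ i, ∑ j, αl l i * αl l j * (k (x i) (x j) - nystrom k u (x i) (x j)) := by
            congr 1
            calc ∑ i, ∑ j, ∑ l, αl l i * αl l j * (k (x i) (x j) - nystrom k u (x i) (x j))
                = ∑ i, ∑ l, ∑ j, αl l i * αl l j * (k (x i) (x j) - nystrom k u (x i) (x j)) :=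
                  Finset.sum_congr rfl fun i _ => Finset.sum_comm
              _ = ∑ l, ∑ i, ∑ j, αl l i * αl l j * (k (x i) (x j) - nystrom k u (x i) (x j)) :=
                  Finset.sum_comm
    rw [split]
    have h1 := nyQ_nonneg k u hk hK x α
    have h2 : 0 ≤ ∑ l, ∑ i, ∑ j, αl l i * αl l j * (k (x i) (x j) - nystrom k u (x i) (x j)) :=
      Finset.sum_nonneg fun l _ => residual_nonneg k u hk hK x (αl l)
    linarith
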